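/- For every even integer N ≥ 2, the full contraction of G_N equals N!!·D·(D+2)⋯(D+N−2): Σ over i_1,…,i_N of δ_{i_1 i_2}δ_{i_3 i_4}⋯δ_{i_{N−1} i_N}·G_N^{i_1…i_N} = N!!·Π_{j=0}^{N/2−1}(D+2j). -/

import Mathlib

open scoped BigOperators

noncomputable section
namespace Fuzzy

/-- The completely symmetric `O(D)`-isotropic tensor
`G_N^{i_1…i_N} = Σ_{π ∈ S_N} δ^{i_{π(1)} i_{π(2)}} ⋯ δ^{i_{π(N−1)} i_{π(N)}}`
of even rank `N = 2M`. -/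
def GN (D M : ℕ) (i : Fin (2 * M) → Fin D) : ℂ :=
  ∑ π : Equiv.Perm (Fin (2 * M)), ∏ m : Fin M,
    (if i (π ⟨2 * m.val, by have := m.isLt; omega⟩) =
        i (π ⟨2 * m.val + 1, by have := m.isLt; omega⟩) then 1 else 0)


def pos0 {M : ℕ} (m : Fin M) : Fin (2*M) := ⟨2*m.val, by have := m.isLt; omega⟩
def pos1 {M : ℕ} (m : Fin M) : Fin (2*M) := ⟨2*m.val+1, by have := m.isLt; omega⟩

/-- colored permutation count -/
def Fc (D M : ℕ) (c : Fin (2*M) → Fin D) : ℕ :=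
  ∑ π : Equiv.Perm (Fin (2*M)), ∏ m : Fin M,
    (if c (π (pos0 m)) = c (π (pos1 m)) then 1 else 0)

lemma pos0_zero {M : ℕ} : pos0 (0 : Fin (M+1)) = (0 : Fin (2*(M+1))) := by
  simp [pos0, Fin.ext_iff]

lemma pos1_zero {M : ℕ} : pos1 (0 : Fin (M+1)) = (1 : Fin (2*(M+1))) := by
  simp [pos1, Fin.ext_iff]

lemma pos0_succ {M : ℕ} (m : Fin M) :
    pos0 (Fin.succ m) = Fin.succ (Fin.succ (pos0 m)) := by
  simp [pos0, Fin.ext_iff]; omega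

lemma pos1_succ {M : ℕ} (m : Fin M) :
    pos1 (Fin.succ m) = Fin.succ (Fin.succ (pos1 m)) := by
  simp [pos1, Fin.ext_iff]; omega

lemma perm_sum_decompose {n : ℕ} (g : Equiv.Perm (Fin (n+1)) → ℕ) :
    ∑ π, g π = ∑ x : Fin (n+1), ∑ τ : Equiv.Perm (Fin n),
      g (Equiv.Perm.decomposeFin.symm (x, τ)) := by
  rw [← Equiv.sum_comp (Equiv.Perm.decomposeFin.symm) g, Fintype.sum_prod_type]

lemma fiber_pair {α γ : Type} [DecidableEq α] [DecidableEq γ] [Fintype α] {q : α → γ} {z : γ}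
    (hq : (Finset.univ.filter (fun a => q a = z)).card = 2)
    {a b : α} (hab : a ≠ b) (ha : q a = z) (hb : q b = z) :
    Finset.univ.filter (fun w => q w = z) = {a, b} := by
  symm
  apply Finset.eq_of_subset_of_card_le
  · intro w hw
    simp only [Finset.mem_insert, Finset.mem_singleton] at hw
    rcases hw with h | h <;> simp [h, ha, hb]
  · rw [hq, Finset.card_pair hab]

lemma fiber_other {α γ : Type} [DecidableEq α] [DecidableEq γ] [Fintype α] {q : α → γ} {z : γ}
    (hq : (Finset.univ.filter (fun a => q a = z)).card = 2)
    {a : α} (ha : q a = z) : ∃ b, b ≠ a ∧ q b = z ∧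
      Finset.univ.filter (fun w => q w = z) = {a, b} := by
  obtain ⟨u, v, huv, hs⟩ := Finset.card_eq_two.mp hq
  have hamem : a ∈ ({u, v} : Finset α) := by rw [← hs]; simp [ha]
  simp only [Finset.mem_insert, Finset.mem_singleton] at hamem
  have hu : q u = z := by
    have : u ∈ Finset.univ.filter (fun w => q w = z) := by rw [hs]; simp
    simpa using this
  have hv : q v = z := by
    have : v ∈ Finset.univ.filter (fun w => q w = z) := by rw [hs]; simp
    simpa using this
  rcases hamem with h | h
  · exact ⟨v, by rw [h]; exact huv.symm, hv, by rw [hs, h]⟩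
  · exact ⟨u, fun hh => huv (hh.trans h), hu, by rw [hs, h, Finset.pair_comm]⟩


section step
variable {M : ℕ}

def Xv (x : Fin (2*M+2)) (y : Fin (2*M+1)) : Fin (2*M+2) := Equiv.swap 0 x y.succ

def Ev (x : Fin (2*M+2)) (y : Fin (2*M+1)) (a : Fin (2*M)) : Fin (2*M+2) :=
  Equiv.swap 0 x ((Equiv.swap 0 y a.succ).succ)

variable (x : Fin (2*M+2)) (y : Fin (2*M+1))

lemma Xv_ne : Xv x y ≠ x := by
  intro h
  have : (y.succ : Fin (2*M+1+1)) = (0 : Fin (2*M+2)) := by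
    have := congrArg (Equiv.swap (0 : Fin (2*M+2)) x) h
    simpa [Xv, Equiv.swap_apply_right] using this
  exact Fin.succ_ne_zero y this

lemma Ev_ne_x (a : Fin (2*M)) : Ev x y a ≠ x := by
  intro h
  have : ((Equiv.swap 0 y a.succ).succ : Fin (2*M+2)) = 0 := by
    have := congrArg (Equiv.swap (0 : Fin (2*M+2)) x) h
    simpa [Ev, Equiv.swap_apply_right] using this
  exact Fin.succ_ne_zero _ this

lemma Ev_ne_X (a : Fin (2*M)) : Ev x y a ≠ Xv x y := by
  intro h
  have h1 : ((Equiv.swap 0 y a.succ).succ : Fin (2*M+2)) = y.succ :=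
    (Equiv.swap 0 x).injective (by simpa [Ev, Xv] using h)
  have h2 : Equiv.swap 0 y a.succ = y := Fin.succ_injective _ h1
  have : (a.succ : Fin (2*M+1)) = 0 := by
    have := congrArg (Equiv.swap (0 : Fin (2*M+1)) y) h2
    simpa [Equiv.swap_apply_right] using this
  exact Fin.succ_ne_zero _ this

lemma Ev_inj : Function.Injective (Ev x y) := by
  intro a b h
  have h1 := (Equiv.swap (0:Fin (2*M+2)) x).injective h
  have h2 := Fin.succ_injective _ h1
  have h3 := (Equiv.swap (0:Fin (2*M+1)) y).injective h2
  exact Fin.succ_injective _ h3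

lemma Ev_surj (w : Fin (2*M+2)) (hx : w ≠ x) (hX : w ≠ Xv x y) : ∃ a, Ev x y a = w := by
  have h1 : Equiv.swap (0:Fin (2*M+2)) x w ≠ 0 := by
    intro h
    exact hx (by simpa [Equiv.swap_apply_left] using (Equiv.swap_apply_eq_iff).mp h)
  obtain ⟨v, hv⟩ := Fin.exists_succ_eq.mpr h1
  have hvy : v ≠ y := by
    intro h; apply hX
    have : Equiv.swap (0:Fin (2*M+2)) x w = y.succ := by rw [← hv, h]
    have := congrArg (Equiv.swap (0:Fin (2*M+2)) x) this
    simpa [Equiv.swap_apply_self, Xv] using this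
  have h2 : Equiv.swap (0:Fin (2*M+1)) y v ≠ 0 := by
    intro h
    exact hvy (by simpa [Equiv.swap_apply_left] using (Equiv.swap_apply_eq_iff).mp h)
  obtain ⟨a, ha⟩ := Fin.exists_succ_eq.mpr h2
  refine ⟨a, ?_⟩
  have : Equiv.swap (0:Fin (2*M+1)) y a.succ = v := by
    rw [ha]; exact Equiv.swap_apply_self _ _ _
  rw [Ev, this, hv]
  exact Equiv.swap_apply_self _ _ _

lemma card_fiber_Ev {γ : Type} [DecidableEq γ] (q : Fin (2*M+2) → γ) (z : γ) :
    (Finset.univ.filter (fun a => q (Ev x y a) = z)).card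
      = (Finset.univ.filter (fun w => q w = z ∧ w ≠ x ∧ w ≠ Xv x y)).card := by
  apply Finset.card_bij (fun a _ => Ev x y a)
  · intro a ha
    simp only [Finset.mem_filter, Finset.mem_univ, true_and] at ha ⊢
    exact ⟨ha, Ev_ne_x x y a, Ev_ne_X x y a⟩
  · intro a _ b _ h
    exact Ev_inj x y h
  · intro w hw
    simp only [Finset.mem_filter, Finset.mem_univ, true_and] at hw
    obtain ⟨a, ha⟩ := Ev_surj x y w hw.2.1 hw.2.2
    exact ⟨a, by simp [ha, hw.1], ha⟩

lemma Fc_succ (D M : ℕ) (c : Fin (2*(M+1)) → Fin D) :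
    Fc D (M+1) c = ∑ x : Fin (2*M+2), ∑ y : Fin (2*M+1),
      (if c x = c (Xv x y) then (1:ℕ) else 0) * Fc D M (fun a => c (Ev x y a)) := by
  rw [Fc]
  rw [show (∑ π : Equiv.Perm (Fin (2*(M+1))), ∏ m : Fin (M+1),
        if c (π (pos0 m)) = c (π (pos1 m)) then 1 else 0)
      = ∑ π : Equiv.Perm (Fin (2*M+1+1)), ∏ m : Fin (M+1),
        if c (π (pos0 m)) = c (π (pos1 m)) then 1 else 0 from rfl,
    perm_sum_decompose (n := 2*M+1)]
  refine Finset.sum_congr rfl fun x _ => ?_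
  rw [perm_sum_decompose (n := 2*M)]
  refine Finset.sum_congr rfl fun y _ => ?_
  rw [Fc, Finset.mul_sum]
  refine Finset.sum_congr rfl fun σ _ => ?_
  rw [Fin.prod_univ_succ]
  congr 1
  · rw [pos0_zero, pos1_zero, Equiv.Perm.decomposeFin_symm_apply_zero,
      Equiv.Perm.decomposeFin_symm_apply_one, Equiv.Perm.decomposeFin_symm_apply_zero]
    rfl
  · refine Finset.prod_congr rfl fun m _ => ?_
    rw [pos0_succ, pos1_succ, Equiv.Perm.decomposeFin_symm_apply_succ,
      Equiv.Perm.decomposeFin_symm_apply_succ,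
      Equiv.Perm.decomposeFin_symm_apply_succ,
      Equiv.Perm.decomposeFin_symm_apply_succ]
    rfl


lemma Xv_surj (w : Fin (2*M+2)) (hw : w ≠ x) : ∃ y, Xv x y = w := by
  have h1 : Equiv.swap (0:Fin (2*M+2)) x w ≠ 0 := by
    intro h
    exact hw (by simpa [Equiv.swap_apply_left] using (Equiv.swap_apply_eq_iff).mp h)
  obtain ⟨v, hv⟩ := Fin.exists_succ_eq.mpr h1
  refine ⟨v, ?_⟩
  rw [Xv, hv]
  exact Equiv.swap_apply_self _ _ _

lemma sum_same {D : ℕ} {γ : Type} [Fintype γ] [DecidableEq γ] (q : Fin (2*M+2) → γ)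
    (hq : ∀ z : γ, (Finset.univ.filter (fun a => q a = z)).card = 2)
    (hs : q (Xv x y) = q x)
    (IH : ∀ (γ' : Type) [Fintype γ'] [DecidableEq γ'] (q' : Fin (2*M) → γ'),
      (∀ z : γ', (Finset.univ.filter (fun a => q' a = z)).card = 2) →
      ∑ j : γ' → Fin D, Fc D M (fun a => j (q' a))
        = ∏ k : Fin M, ((2*k.val+2) * (D + 2*k.val))) :
    ∑ j : γ → Fin D,
      (if j (q x) = j (q (Xv x y)) then 1 else 0) * Fc D M (fun a => j (q (Ev x y a)))
      = D * ∏ k : Fin M, ((2*k.val+2) * (D + 2*k.val)) := by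
  have hfib : Finset.univ.filter (fun w => q w = q x) = {x, Xv x y} :=
    fiber_pair (hq (q x)) (Ne.symm (Xv_ne x y)) rfl hs
  have hne : ∀ a, q (Ev x y a) ≠ q x := by
    intro a h
    have hm : Ev x y a ∈ ({x, Xv x y} : Finset _) := by
      rw [← hfib]; simp [h]
    simp only [Finset.mem_insert, Finset.mem_singleton] at hm
    rcases hm with h' | h'
    exacts [Ev_ne_x x y a h', Ev_ne_X x y a h']
  simp only [hs, eq_self_iff_true, if_true, one_mul]
  rw [← Equiv.sum_comp (Equiv.funSplitAt (q x) (Fin D)).symm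
      (fun j => Fc D M (fun a => j (q (Ev x y a)))), Fintype.sum_prod_type]
  have hrw : ∀ (v : Fin D) (k : {z : γ // z ≠ q x} → Fin D),
      Fc D M (fun a => (Equiv.funSplitAt (q x) (Fin D)).symm (v, k) (q (Ev x y a)))
        = Fc D M (fun a => k ⟨q (Ev x y a), hne a⟩) := by
    intro v k; congr 1; funext a
    rw [Equiv.funSplitAt_symm_apply]
    exact dif_neg (hne a)
  simp only [hrw]
  have hfibers : ∀ z0 : {z : γ // z ≠ q x},
      (Finset.univ.filter (fun a : Fin (2*M) =>
        (⟨q (Ev x y a), hne a⟩ : {z : γ // z ≠ q x}) = z0)).card = 2 := by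
    intro z0
    have h1 : (Finset.univ.filter (fun a : Fin (2*M) =>
        (⟨q (Ev x y a), hne a⟩ : {z : γ // z ≠ q x}) = z0))
        = Finset.univ.filter (fun a => q (Ev x y a) = z0.val) := by
      ext a; simp [Subtype.ext_iff]
    rw [h1, card_fiber_Ev]
    have h2 : (Finset.univ.filter (fun w => q w = z0.val ∧ w ≠ x ∧ w ≠ Xv x y))
        = Finset.univ.filter (fun w => q w = z0.val) := by
      ext w
      simp only [Finset.mem_filter, Finset.mem_univ, true_and]
      constructor
      · exact fun h => h.1
      · intro h
        refine ⟨h, ?_, ?_⟩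
        · rintro rfl; exact z0.2 h.symm
        · rintro rfl; exact z0.2 (h.symm.trans hs)
    rw [h2, hq]
  simp only [IH {z : γ // z ≠ q x} (fun a => ⟨q (Ev x y a), hne a⟩) hfibers]
  simp [Finset.sum_const, Finset.card_univ, mul_comm]

lemma sum_diff {D : ℕ} {γ : Type} [Fintype γ] [DecidableEq γ] (q : Fin (2*M+2) → γ)
    (hq : ∀ z : γ, (Finset.univ.filter (fun a => q a = z)).card = 2)
    (hd : q (Xv x y) ≠ q x)
    (IH : ∀ (γ' : Type) [Fintype γ'] [DecidableEq γ'] (q' : Fin (2*M) → γ'),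
      (∀ z : γ', (Finset.univ.filter (fun a => q' a = z)).card = 2) →
      ∑ j : γ' → Fin D, Fc D M (fun a => j (q' a))
        = ∏ k : Fin M, ((2*k.val+2) * (D + 2*k.val))) :
    ∑ j : γ → Fin D,
      (if j (q x) = j (q (Xv x y)) then 1 else 0) * Fc D M (fun a => j (q (Ev x y a)))
      = ∏ k : Fin M, ((2*k.val+2) * (D + 2*k.val)) := by
  set X := Xv x y with hX
  have hd' : q x ≠ q X := Ne.symm hd
  set q2 : Fin (2*M) → {z : γ // z ≠ q X} := fun a =>
    if h : q (Ev x y a) = q X then ⟨q x, hd'⟩ else ⟨q (Ev x y a), h⟩ with hq2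
  rw [← Equiv.sum_comp (Equiv.funSplitAt (q X) (Fin D)).symm
      (fun j => (if j (q x) = j (q X) then 1 else 0) * Fc D M (fun a => j (q (Ev x y a)))),
    Fintype.sum_prod_type]
  have hrw : ∀ (v : Fin D) (k : {z : γ // z ≠ q X} → Fin D),
      (if (Equiv.funSplitAt (q X) (Fin D)).symm (v, k) (q x)
          = (Equiv.funSplitAt (q X) (Fin D)).symm (v, k) (q X) then 1 else 0)
        * Fc D M (fun a => (Equiv.funSplitAt (q X) (Fin D)).symm (v, k) (q (Ev x y a)))
      = (if k ⟨q x, hd'⟩ = v then 1 else 0)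
        * Fc D M (fun a => (Equiv.funSplitAt (q X) (Fin D)).symm (v, k) (q (Ev x y a))) := by
    intro v k
    congr 2
    rw [Equiv.funSplitAt_symm_apply, Equiv.funSplitAt_symm_apply, dif_neg hd', dif_pos rfl]
  simp only [hrw]
  rw [Finset.sum_comm]
  have hcollapse : ∀ k : {z : γ // z ≠ q X} → Fin D,
      ∑ v : Fin D, (if k ⟨q x, hd'⟩ = v then 1 else 0)
        * Fc D M (fun a => (Equiv.funSplitAt (q X) (Fin D)).symm (v, k) (q (Ev x y a)))
      = Fc D M (fun a => k (q2 a)) := by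
    intro k
    rw [Finset.sum_eq_single (k ⟨q x, hd'⟩)]
    · rw [if_pos rfl, one_mul]
      congr 1; funext a
      simp only [Equiv.funSplitAt_symm_apply, hq2]
      by_cases h : q (Ev x y a) = q X
      · rw [dif_pos h, dif_pos h]
      · rw [dif_neg h, dif_neg h]
    · intro v _ hv
      rw [if_neg (Ne.symm hv), zero_mul]
    · intro h; exact absurd (Finset.mem_univ _) h
  simp only [hcollapse]
  have hfibers : ∀ z0 : {z : γ // z ≠ q X},
      (Finset.univ.filter (fun a : Fin (2*M) => q2 a = z0)).card = 2 := by
    intro z0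
    by_cases hz : z0.val = q x
    · have h1 : (Finset.univ.filter (fun a : Fin (2*M) => q2 a = z0))
          = Finset.univ.filter
              (fun a => q (Ev x y a) = q X ∨ q (Ev x y a) = q x) := by
        ext a
        simp only [Finset.mem_filter, Finset.mem_univ, true_and, hq2]
        by_cases h : q (Ev x y a) = q X
        · simp [h, dif_pos h, Subtype.ext_iff, hz.symm]
        · simp [h, dif_neg h, Subtype.ext_iff, hz]
      rw [h1, Finset.filter_or, Finset.card_union_of_disjoint, card_fiber_Ev, card_fiber_Ev]
      · obtain ⟨X', hX'ne, hqX', hfibX⟩ := fiber_other (hq (q X)) (rfl : q X = q X)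
        obtain ⟨x', hx'ne, hqx', hfibx⟩ := fiber_other (hq (q x)) (rfl : q x = q x)
        have e1 : (Finset.univ.filter (fun w => q w = q X ∧ w ≠ x ∧ w ≠ X)) = {X'} := by
          ext w
          simp only [Finset.mem_filter, Finset.mem_univ, true_and, Finset.mem_singleton]
          constructor
          · rintro ⟨h1, h2, h3⟩
            have : w ∈ ({X, X'} : Finset _) := by rw [← hfibX]; simp [h1]
            simp only [Finset.mem_insert, Finset.mem_singleton] at this
            tauto
          · rintro rfl
            refine ⟨hqX', ?_, hX'ne⟩
            rintro rfl; exact hd (hqX'.symm)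
        have e2 : (Finset.univ.filter (fun w => q w = q x ∧ w ≠ x ∧ w ≠ X)) = {x'} := by
          ext w
          simp only [Finset.mem_filter, Finset.mem_univ, true_and, Finset.mem_singleton]
          constructor
          · rintro ⟨h1, h2, h3⟩
            have : w ∈ ({x, x'} : Finset _) := by rw [← hfibx]; simp [h1]
            simp only [Finset.mem_insert, Finset.mem_singleton] at this
            tauto
          · rintro rfl
            refine ⟨hqx', ?_, ?_⟩
            · exact hx'ne
            · rintro rfl; exact hd hqx'
        rw [e1, e2]; rfl
      · rw [Finset.disjoint_filter]
        intro a _ h1 h2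
        exact hd (h1 ▸ h2 : q X = q x)
    · have h1 : (Finset.univ.filter (fun a : Fin (2*M) => q2 a = z0))
          = Finset.univ.filter (fun a => q (Ev x y a) = z0.val) := by
        ext a
        simp only [Finset.mem_filter, Finset.mem_univ, true_and, hq2]
        by_cases h : q (Ev x y a) = q X
        · rw [dif_pos h]
          simp only [Subtype.ext_iff]
          constructor
          · intro hh; exact absurd hh.symm hz
          · intro hh; exact absurd (hh.symm.trans h) z0.2
        · rw [dif_neg h]
          simp [Subtype.ext_iff]
      rw [h1, card_fiber_Ev]
      have h2 : (Finset.univ.filter (fun w => q w = z0.val ∧ w ≠ x ∧ w ≠ X))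
          = Finset.univ.filter (fun w => q w = z0.val) := by
        ext w
        simp only [Finset.mem_filter, Finset.mem_univ, true_and]
        constructor
        · exact fun h => h.1
        · intro h
          refine ⟨h, ?_, ?_⟩
          · rintro rfl; exact hz h.symm
          · rintro rfl; exact z0.2 h.symm
      rw [h2, hq]
  exact IH _ q2 hfibers

lemma card_y_same {γ : Type} [DecidableEq γ] (q : Fin (2*M+2) → γ)
    (hq : ∀ z : γ, (Finset.univ.filter (fun a => q a = z)).card = 2) (x : Fin (2*M+2)) :
    (Finset.univ.filter (fun y : Fin (2*M+1) => q (Xv x y) = q x)).card = 1 := by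
  obtain ⟨x', hx'ne, hqx', hfibx⟩ := fiber_other (hq (q x)) (rfl : q x = q x)
  have h1 : (Finset.univ.filter (fun y : Fin (2*M+1) => q (Xv x y) = q x)).card
      = (Finset.univ.filter (fun w : Fin (2*M+2) => q w = q x ∧ w ≠ x)).card := by
    apply Finset.card_bij (fun y _ => Xv x y)
    · intro y hy
      simp only [Finset.mem_filter, Finset.mem_univ, true_and] at hy ⊢
      exact ⟨hy, Xv_ne x y⟩
    · intro a _ b _ h
      have h1 := (Equiv.swap (0:Fin (2*M+2)) x).injective h
      exact Fin.succ_injective _ h1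
    · intro w hw
      simp only [Finset.mem_filter, Finset.mem_univ, true_and] at hw
      obtain ⟨y, hy⟩ := Xv_surj x w hw.2
      exact ⟨y, by simp [hy, hw.1], hy⟩
  rw [h1]
  have h2 : (Finset.univ.filter (fun w : Fin (2*M+2) => q w = q x ∧ w ≠ x)) = {x'} := by
    ext w
    simp only [Finset.mem_filter, Finset.mem_univ, true_and, Finset.mem_singleton]
    constructor
    · rintro ⟨hw1, hw2⟩
      have : w ∈ ({x, x'} : Finset _) := by rw [← hfibx]; simp [hw1]
      simp only [Finset.mem_insert, Finset.mem_singleton] at this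
      tauto
    · rintro rfl
      exact ⟨hqx', hx'ne⟩
  rw [h2]
  rfl

end step

lemma main_count (D : ℕ) : ∀ (M : ℕ) (γ : Type) [Fintype γ] [DecidableEq γ]
    (q : Fin (2*M) → γ),
    (∀ z : γ, (Finset.univ.filter (fun a => q a = z)).card = 2) →
    ∑ j : γ → Fin D, Fc D M (fun a => j (q a))
      = ∏ k : Fin M, ((2*k.val+2) * (D + 2*k.val)) := by
  intro M
  induction M with
  | zero =>
    intro γ _ _ q hq
    haveI : IsEmpty γ := ⟨fun z => by
      have h0 := hq z
      have he : (Finset.univ.filter (fun a : Fin (2*0) => q a = z)) = ∅ := by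
        apply Finset.eq_empty_of_forall_notMem
        intro a _
        exact absurd a.isLt (by omega)
      rw [he] at h0
      simp at h0⟩
    simp [Fc, Fintype.card_perm]
  | succ M IH =>
    intro γ _ _ q hq
    have hFc : ∀ j : γ → Fin D, Fc D (M+1) (fun a => j (q a))
        = ∑ x : Fin (2*M+2), ∑ y : Fin (2*M+1),
          (if j (q x) = j (q (Xv x y)) then 1 else 0)
            * Fc D M (fun a => j (q (Ev x y a))) :=
      fun j => Fc_succ D M _
    simp only [hFc]
    rw [Finset.sum_comm]
    refine Eq.trans (Finset.sum_congr rfl fun x _ => Finset.sum_comm) ?_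
    have hsplit : ∀ x : Fin (2*M+2),
        ∑ y : Fin (2*M+1), ∑ j : γ → Fin D,
          (if j (q x) = j (q (Xv x y)) then 1 else 0)
            * Fc D M (fun a => j (q (Ev x y a)))
        = D * (∏ k : Fin M, ((2*k.val+2) * (D + 2*k.val)))
          + 2*M * (∏ k : Fin M, ((2*k.val+2) * (D + 2*k.val))) := by
      intro x
      rw [← Finset.sum_filter_add_sum_filter_not Finset.univ
          (fun y => q (Xv x y) = q x)]
      have hc1 := card_y_same q hq x
      have hc2 : (Finset.univ.filter
          (fun y : Fin (2*M+1) => ¬ q (Xv x y) = q x)).card = 2*M := by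
        have := Finset.card_filter_add_card_filter_not
          (s := (Finset.univ : Finset (Fin (2*M+1))))
          (fun y => q (Xv x y) = q x)
        rw [Finset.card_univ, Fintype.card_fin, hc1] at this
        omega
      rw [Finset.sum_congr rfl (fun y hy =>
          sum_same x y q hq (Finset.mem_filter.mp hy).2 IH),
        Finset.sum_congr rfl (fun y hy =>
          sum_diff x y q hq (Finset.mem_filter.mp hy).2 IH),
        Finset.sum_const, Finset.sum_const, hc1, hc2, one_smul, smul_eq_mul]
    simp only [hsplit]
    rw [Finset.sum_const, Finset.card_univ, Fintype.card_fin, smul_eq_mul,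
      Fin.prod_univ_castSucc]
    simp only [Fin.coe_castSucc, Fin.val_last]
    ring

def blk {M : ℕ} (a : Fin (2*M)) : Fin M := ⟨a.val / 2, by have := a.isLt; omega⟩

lemma blk_pos0 {M : ℕ} (m : Fin M) : blk (pos0 m) = m := by
  simp only [blk, pos0, Fin.ext_iff]
  omega

lemma blk_pos1 {M : ℕ} (m : Fin M) : blk (pos1 m) = m := by
  simp only [blk, pos1, Fin.ext_iff]
  omega

lemma hblk {M : ℕ} (z : Fin M) :
    (Finset.univ.filter (fun a : Fin (2*M) => blk a = z)).card = 2 := by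
  have h1 : (Finset.univ.filter (fun a : Fin (2*M) => blk a = z))
      = {pos0 z, pos1 z} := by
    ext a
    simp only [Finset.mem_filter, Finset.mem_univ, true_and, Finset.mem_insert,
      Finset.mem_singleton, blk, pos0, pos1, Fin.ext_iff]
    have := a.isLt
    omega
  have hne : pos0 z ≠ pos1 z := by
    intro h
    have := congrArg Fin.val h
    simp [pos0, pos1] at this
  rw [h1, Finset.card_pair hne]

lemma nat_version (D M : ℕ) :
    (∑ i : Fin (2*M) → Fin D,
      (∏ m : Fin M, if i (pos0 m) = i (pos1 m) then 1 else 0) * Fc D M i)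
      = ∏ k : Fin M, ((2*k.val+2) * (D + 2*k.val)) := by
  rw [← main_count D M (Fin M) blk hblk]
  calc ∑ i : Fin (2*M) → Fin D,
        (∏ m : Fin M, if i (pos0 m) = i (pos1 m) then 1 else 0) * Fc D M i
      = ∑ i : Fin (2*M) → Fin D,
        (if (∀ m : Fin M, i (pos0 m) = i (pos1 m)) then Fc D M i else 0) := by
        refine Finset.sum_congr rfl fun i _ => ?_
        by_cases h : ∀ m : Fin M, i (pos0 m) = i (pos1 m)
        · rw [if_pos h, Finset.prod_eq_one (fun m _ => if_pos (h m)), one_mul]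
        · rw [if_neg h]
          obtain ⟨m0, hm0⟩ := not_forall.mp h
          rw [Finset.prod_eq_zero (Finset.mem_univ m0)
            (show (if i (pos0 m0) = i (pos1 m0) then (1:ℕ) else 0) = 0 from if_neg hm0), zero_mul]
    _ = ∑ i ∈ Finset.univ.filter
          (fun i : Fin (2*M) → Fin D => ∀ m : Fin M, i (pos0 m) = i (pos1 m)),
          Fc D M i := (Finset.sum_filter _ _).symm
    _ = ∑ j : Fin M → Fin D, Fc D M (fun a => j (blk a)) := by
        symm
        apply Finset.sum_bij (fun (j : Fin M → Fin D) _ => fun a => j (blk a))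
        · intro j _
          simp only [Finset.mem_filter, Finset.mem_univ, true_and]
          intro m
          rw [blk_pos0, blk_pos1]
        · intro j _ j' _ h
          funext m
          have := congrFun h (pos0 m)
          rwa [blk_pos0] at this
        · intro i hi
          simp only [Finset.mem_filter, Finset.mem_univ, true_and] at hi
          refine ⟨fun m => i (pos0 m), Finset.mem_univ _, ?_⟩
          funext a
          have hcase : a = pos0 (blk a) ∨ a = pos1 (blk a) := by
            simp only [pos0, pos1, blk, Fin.ext_iff]
            omega
          show i (pos0 (blk a)) = i a
          rcases hcase with h | h
          · exact (congrArg i h).symm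
          · exact (hi (blk a)).trans (congrArg i h).symm
        · intro j _
          rfl

lemma df_prod (M : ℕ) : (2*M).doubleFactorial = ∏ k : Fin M, (2*k.val+2) := by
  induction M with
  | zero => rfl
  | succ M IH =>
    rw [show 2*(M+1) = 2*M+2 from rfl, Nat.doubleFactorial_add_two,
      Fin.prod_univ_castSucc]
    simp only [Fin.coe_castSucc, Fin.val_last]
    rw [← IH]
    ring

/-- The full contraction of `G_N` equals
`N!!·D·(D+2)⋯(D+N−2)` (with `N = 2M`). -/
theorem statement8 (D M : ℕ) (hD : 2 ≤ D) (hM : 1 ≤ M) :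
    ∑ i : Fin (2 * M) → Fin D,
      (∏ m : Fin M,
        (if i ⟨2 * m.val, by have := m.isLt; omega⟩ =
            i ⟨2 * m.val + 1, by have := m.isLt; omega⟩ then (1 : ℂ) else 0)) * GN D M i =
      ((2 * M).doubleFactorial : ℂ) * ∏ j : Fin M, ((D : ℂ) + 2 * (j.val : ℂ)) := by
  have h1 : ∑ i : Fin (2 * M) → Fin D,
      (∏ m : Fin M,
        (if i ⟨2 * m.val, by have := m.isLt; omega⟩ =
            i ⟨2 * m.val + 1, by have := m.isLt; omega⟩ then (1 : ℂ) else 0)) * GN D M i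
      = ((∑ i : Fin (2*M) → Fin D,
          (∏ m : Fin M, if i (pos0 m) = i (pos1 m) then 1 else 0) * Fc D M i : ℕ) : ℂ) := by
    push_cast [GN, Fc, Nat.cast_ite]
    rfl
  have h2 : (((2*M).doubleFactorial : ℕ) : ℂ) * ∏ j : Fin M, ((D : ℂ) + 2 * (j.val : ℂ))
      = ((∏ k : Fin M, ((2*k.val+2) * (D + 2*k.val)) : ℕ) : ℂ) := by
    rw [df_prod]
    push_cast
    rw [← Finset.prod_mul_distrib]
  rw [h1, nat_version, ← h2]

end Fuzzy
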